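/- Let n, t ≥ 1, let p be a real polynomial in x₁,…,xₙ with deg(p) ≤ t, and let L : ℝ[x₁,…,xₙ] → ℝ be a linear functional with L(1) = 1 and L(q²) ≥ 0 for every polynomial q with 2·deg(q) ≤ 3t. Then there exists a polynomial r that is a finite sum of squares of polynomials each of degree ≤ t, such that L(r) > 0 and |L(r·p)| ≥ (1/3) · L(r) · √(L(p²)). -/

import Mathlib

open MvPolynomial

lemma expand_sq {n : ℕ} (c : ℝ) (p : MvPolynomial (Fin n) ℝ) :
    (C c + p) ^ 2 = (c ^ 2) • (1 : MvPolynomial (Fin n) ℝ) + (2 * c) • p + p ^ 2 := by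
  simp only [MvPolynomial.smul_eq_C_mul, map_pow, map_mul, map_ofNat]
  ring

lemma expand_sq_mul {n : ℕ} (c : ℝ) (p : MvPolynomial (Fin n) ℝ) :
    (C c + p) ^ 2 * p = (c ^ 2) • p + (2 * c) • (p ^ 2) + p ^ 3 := by
  simp only [MvPolynomial.smul_eq_C_mul, map_pow, map_mul, map_ofNat]
  ring

/-- **Scalar-fixing reweighting lemma.** Given a degree-`3t` pseudo-expectation `L`
(a linear functional with `L 1 = 1` and `L(q²) ≥ 0` whenever `2·deg q ≤ 3t`) and a
polynomial `p` of degree at most `t`, there is a sum `r` of squares of polynomials of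
degree at most `t` with `L r > 0` and `|L(r·p)| ≥ (1/3) · L r · √(L(p²))`. -/
theorem stmt_6 (n t : ℕ) (hn : 1 ≤ n) (ht : 1 ≤ t)
    (p : MvPolynomial (Fin n) ℝ) (hp : p.totalDegree ≤ t)
    (L : MvPolynomial (Fin n) ℝ →ₗ[ℝ] ℝ) (hL1 : L 1 = 1)
    (hLsq : ∀ q : MvPolynomial (Fin n) ℝ, 2 * q.totalDegree ≤ 3 * t → 0 ≤ L (q ^ 2)) :
    ∃ r : MvPolynomial (Fin n) ℝ,
      (∃ (m : ℕ) (g : Fin m → MvPolynomial (Fin n) ℝ),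
        (∀ i, (g i).totalDegree ≤ t) ∧ r = ∑ i, (g i) ^ 2) ∧
      0 < L r ∧
      (1 / 3) * L r * Real.sqrt (L (p ^ 2)) ≤ |L (r * p)| := by
  have hp2 : 0 ≤ L (p ^ 2) := hLsq p (by omega)
  set s : ℝ := Real.sqrt (L (p ^ 2)) with hs
  have hs0 : 0 ≤ s := Real.sqrt_nonneg _
  have hss : s ^ 2 = L (p ^ 2) := Real.sq_sqrt hp2
  set a : ℝ := L p with ha
  -- helper: witness for r = (C c + p)^2
  have hwit : ∀ c : ℝ, ∃ (m : ℕ) (g : Fin m → MvPolynomial (Fin n) ℝ),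
      (∀ i, (g i).totalDegree ≤ t) ∧ (C c + p) ^ 2 = ∑ i, (g i) ^ 2 := by
    intro c
    refine ⟨1, fun _ => C c + p, fun _ => ?_, by simp⟩
    refine (totalDegree_add _ _).trans (max_le ?_ hp)
    simp [totalDegree_C]
  have hLr : ∀ c : ℝ, L ((C c + p) ^ 2) = c ^ 2 + 2 * c * a + L (p ^ 2) := by
    intro c
    rw [expand_sq]
    simp [map_add, map_smul, hL1, smul_eq_mul, mul_assoc]
    exact Or.inl ha.symm
  have hLrp : ∀ c : ℝ, L ((C c + p) ^ 2 * p) = c ^ 2 * a + 2 * c * L (p ^ 2) + L (p ^ 3) := by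
    intro c
    rw [expand_sq_mul]
    simp [map_add, map_smul, smul_eq_mul, mul_assoc]
    exact Or.inl ha.symm
  by_cases hcase : (1 / 3) * s ≤ |a|
  · -- r = 1 works
    refine ⟨1, ⟨1, fun _ => 1, fun _ => by simp, by simp⟩, by simp [hL1], ?_⟩
    simpa [hL1] using hcase
  · push_neg at hcase
    have hsp : 0 < s := by have := lt_of_le_of_lt (abs_nonneg a) hcase; linarith
    have habs : |a| < s / 3 := by linarith
    have ha1 : -(s / 3) < a := (abs_lt.mp habs).1
    have ha2 : a < s / 3 := (abs_lt.mp habs).2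
    set A : ℝ := s ^ 2 * a + L (p ^ 3) with hA
    by_cases hApos : 0 ≤ A
    · -- r = (C s + p)^2
      refine ⟨(C s + p) ^ 2, hwit s, ?_, ?_⟩
      · rw [hLr s, ← hss]; nlinarith
      · rw [hLr s, hLrp s, ← hss]
        have key : s ^ 2 * a + 2 * s * s ^ 2 + L (p ^ 3) = A + 2 * s ^ 3 := by rw [hA]; ring
        rw [key, abs_of_nonneg (by nlinarith)]
        nlinarith
    · push_neg at hApos
      refine ⟨(C (-s) + p) ^ 2, hwit (-s), ?_, ?_⟩
      · rw [hLr (-s), ← hss]; nlinarith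
      · rw [hLr (-s), hLrp (-s), ← hss]
        have key : (-s) ^ 2 * a + 2 * (-s) * s ^ 2 + L (p ^ 3) = A - 2 * s ^ 3 := by
          rw [hA]; ring
        rw [key, abs_of_nonpos (by nlinarith), neg_sub]
        nlinarith
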